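/- Let l1, l2, l3 > 0 with l1 + l2 + l3 = 1, let max(l1,l2,l3) < τ ≤ 1/2, and set r = 1/2 − τ and xj = 1 − 2*lj. Let F = F_τ^{l1,l2,l3}. Then 0 < τ−l2 < l1 < l1+τ−l3 < l1+l2 < l2+τ < 1, and on the six intervals I2⁻ = (0, τ−l2), I3⁺ = (τ−l2, l1), I3⁻ = (l1, l1+τ−l3), I1⁺ = (l1+τ−l3, l1+l2), I1⁻ = (l1+l2, l2+τ), I2⁺ = (l2+τ, 1), whose lengths are respectively x2/2 − r, x3/2 + r, x3/2 − r, x1/2 + r, x1/2 − r, x2/2 + r, the square F² satisfies F²(x) ≡ x + lj (mod 1) for x ∈ Ij⁻ and F²(x) ≡ x − lj (mod 1) for x ∈ Ij⁺ (j = 1,2,3). In particular F² is a 6-interval exchange transformation, every displacement F²(x) − x lies in the set {±l1, ±l2, ±l3} (mod 1), and F²(x) ≠ x for every x in these six intervals. -/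
import Mathlib


open Set

noncomputable section

local instance : Fact ((0:ℝ) < 1) := ⟨one_pos⟩

/-- Representative in `[0,1)` of a point of the circle `ℝ/ℤ`. -/
def rep (x : AddCircle (1:ℝ)) : ℝ := (AddCircle.equivIco 1 0 x : ℝ)

/-- Projection `ℝ → ℝ/ℤ`. -/
def toCirc (t : ℝ) : AddCircle (1:ℝ) := (t : AddCircle (1:ℝ))

/-- The fully flipped 3-interval exchange transformation `F_τ^{l1,l2,l3}`
(it depends only on `l1`, `l2`, `τ`, since `l3 = 1 - l1 - l2`). -/
def FF (l1 l2 τ : ℝ) (x : AddCircle (1:ℝ)) : AddCircle (1:ℝ) :=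
  if rep x < l1 then toCirc (l1 - rep x + τ)
  else if rep x < l1 + l2 then toCirc (2*l1 + l2 - rep x + τ)
  else toCirc (l1 + l2 + 1 - rep x + τ)

lemma rep_coe {t : ℝ} (h0 : 0 ≤ t) (h1 : t < 1) : rep (toCirc t) = t := by
  unfold rep toCirc
  rw [AddCircle.coe_equivIco_mk_apply]
  simp [Int.fract_eq_self.2 ⟨h0, h1⟩]

lemma toCirc_add_one (t : ℝ) : toCirc (t + 1) = toCirc t := by
  unfold toCirc
  exact AddCircle.coe_add_period 1 t

lemma FF_eval1 (l1 l2 τ x : ℝ) (h0 : 0 ≤ x) (h1 : x < l1) (hx1 : x < 1) :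
    FF l1 l2 τ (toCirc x) = toCirc (l1 - x + τ) := by
  unfold FF; rw [rep_coe h0 hx1, if_pos h1]

lemma FF_eval2 (l1 l2 τ x : ℝ) (h0 : 0 ≤ x) (ha : l1 ≤ x) (hb : x < l1 + l2) (hx1 : x < 1) :
    FF l1 l2 τ (toCirc x) = toCirc (2*l1 + l2 - x + τ) := by
  unfold FF; rw [rep_coe h0 hx1, if_neg (not_lt.2 ha), if_pos hb]

lemma FF_eval3 (l1 l2 τ x : ℝ) (h0 : 0 ≤ x) (hl : l1 ≤ x) (ha : l1 + l2 ≤ x) (hx1 : x < 1) :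
    FF l1 l2 τ (toCirc x) = toCirc (l1 + l2 + 1 - x + τ) := by
  unfold FF
  rw [rep_coe h0 hx1, if_neg (not_lt.2 hl), if_neg (not_lt.2 ha)]

lemma toCirc_ne (x d : ℝ) (hd0 : d ≠ 0) (hd1 : |d| < 1) : toCirc (x + d) ≠ toCirc x := by
  intro h
  have hd : toCirc d = 0 := by
    have hxd : toCirc (x + d) = toCirc x + toCirc d := rfl
    rw [hxd] at h
    exact add_left_cancel (a := toCirc x) (by rw [h, add_zero])
  rw [show toCirc d = (d : AddCircle (1:ℝ)) from rfl, AddCircle.coe_eq_zero_iff] at hd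
  obtain ⟨n, hn⟩ := hd
  simp only [zsmul_eq_mul, mul_one] at hn
  have hn0 : n ≠ 0 := fun h' => hd0 (by rw [← hn, h']; simp)
  have h1n : (1:ℝ) ≤ |(n:ℝ)| := by
    rw [show |(n:ℝ)| = ((|n|:ℤ):ℝ) by push_cast; ring]
    exact_mod_cast Int.one_le_abs hn0
  rw [hn] at h1n; linarith

/-- For `max lj < τ ≤ 1/2`, the square of `F_τ^{l1,l2,l3}` is a 6-interval exchange
transformation: the circle splits (up to six points) into the six arcs
`I2⁻, I3⁺, I3⁻, I1⁺, I1⁻, I2⁺`, of the indicated lengths, and `F²` is the translation by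
`+lj` on `Ij⁻` and by `-lj` on `Ij⁺`; in particular every displacement lies in
`{±l1, ±l2, ±l3} (mod 1)` and `F²` has no fixed point on these arcs. -/
theorem statement4 (l1 l2 l3 τ : ℝ)
    (h1 : 0 < l1) (h2 : 0 < l2) (h3 : 0 < l3) (hsum : l1 + l2 + l3 = 1)
    (hτmax : max l1 (max l2 l3) < τ) (hτ : τ ≤ 1/2) :
    -- the six endpoints are in increasing order
    (0 < τ - l2 ∧ τ - l2 < l1 ∧ l1 < l1 + τ - l3 ∧ l1 + τ - l3 < l1 + l2 ∧
      l1 + l2 < l2 + τ ∧ l2 + τ < 1) ∧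
    -- lengths: |Ij^±| = xj/2 ± r  with  xj = 1 - 2*lj,  r = 1/2 - τ
    ((τ - l2) - 0 = (1 - 2*l2)/2 - (1/2 - τ) ∧
     l1 - (τ - l2) = (1 - 2*l3)/2 + (1/2 - τ) ∧
     (l1 + τ - l3) - l1 = (1 - 2*l3)/2 - (1/2 - τ) ∧
     (l1 + l2) - (l1 + τ - l3) = (1 - 2*l1)/2 + (1/2 - τ) ∧
     (l2 + τ) - (l1 + l2) = (1 - 2*l1)/2 - (1/2 - τ) ∧
     1 - (l2 + τ) = (1 - 2*l2)/2 + (1/2 - τ)) ∧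
    -- displacements of F² on the six arcs
    (∀ x ∈ Ioo (0:ℝ) (τ - l2),
        FF l1 l2 τ (FF l1 l2 τ (toCirc x)) = toCirc (x + l2)) ∧
    (∀ x ∈ Ioo (τ - l2) l1,
        FF l1 l2 τ (FF l1 l2 τ (toCirc x)) = toCirc (x - l3)) ∧
    (∀ x ∈ Ioo l1 (l1 + τ - l3),
        FF l1 l2 τ (FF l1 l2 τ (toCirc x)) = toCirc (x + l3)) ∧
    (∀ x ∈ Ioo (l1 + τ - l3) (l1 + l2),
        FF l1 l2 τ (FF l1 l2 τ (toCirc x)) = toCirc (x - l1)) ∧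
    (∀ x ∈ Ioo (l1 + l2) (l2 + τ),
        FF l1 l2 τ (FF l1 l2 τ (toCirc x)) = toCirc (x + l1)) ∧
    (∀ x ∈ Ioo (l2 + τ) 1,
        FF l1 l2 τ (FF l1 l2 τ (toCirc x)) = toCirc (x - l2)) ∧
    -- every displacement lies in {±l1, ±l2, ±l3} (mod 1)
    (∀ x ∈ Ioo (0:ℝ) (τ - l2) ∪ Ioo (τ - l2) l1 ∪ Ioo l1 (l1 + τ - l3) ∪
        Ioo (l1 + τ - l3) (l1 + l2) ∪ Ioo (l1 + l2) (l2 + τ) ∪ Ioo (l2 + τ) 1,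
      ∃ d ∈ ({l1, -l1, l2, -l2, l3, -l3} : Set ℝ),
        FF l1 l2 τ (FF l1 l2 τ (toCirc x)) = toCirc (x + d)) ∧
    -- F² has no fixed point on these arcs
    (∀ x ∈ Ioo (0:ℝ) (τ - l2) ∪ Ioo (τ - l2) l1 ∪ Ioo l1 (l1 + τ - l3) ∪
        Ioo (l1 + τ - l3) (l1 + l2) ∪ Ioo (l1 + l2) (l2 + τ) ∪ Ioo (l2 + τ) 1,
      FF l1 l2 τ (FF l1 l2 τ (toCirc x)) ≠ toCirc x) := by
  have hm := max_lt_iff.1 hτmax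
  have hm' := max_lt_iff.1 hm.2
  have hl1 : l1 < τ := hm.1
  have hl2 : l2 < τ := hm'.1
  have hl3 : l3 < τ := hm'.2
  -- the six case computations
  have C1 : ∀ x ∈ Ioo (0:ℝ) (τ - l2),
      FF l1 l2 τ (FF l1 l2 τ (toCirc x)) = toCirc (x + l2) := by
    rintro x ⟨ha, hb⟩
    rw [FF_eval1 l1 l2 τ x (le_of_lt ha) (by linarith) (by linarith),
      FF_eval3 l1 l2 τ _ (by linarith) (by linarith) (by linarith) (by linarith),
      show l1 + l2 + 1 - (l1 - x + τ) + τ = (x + l2) + 1 by ring, toCirc_add_one]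
  have C2 : ∀ x ∈ Ioo (τ - l2) l1,
      FF l1 l2 τ (FF l1 l2 τ (toCirc x)) = toCirc (x - l3) := by
    rintro x ⟨ha, hb⟩
    rw [FF_eval1 l1 l2 τ x (by linarith) hb (by linarith),
      FF_eval2 l1 l2 τ _ (by linarith) (by linarith) (by linarith) (by linarith),
      show 2*l1 + l2 - (l1 - x + τ) + τ = (x - l3) + 1 by linarith [hsum] ,
      toCirc_add_one]
  have C3 : ∀ x ∈ Ioo l1 (l1 + τ - l3),
      FF l1 l2 τ (FF l1 l2 τ (toCirc x)) = toCirc (x + l3) := by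
    rintro x ⟨ha, hb⟩
    rw [FF_eval2 l1 l2 τ x (by linarith) (le_of_lt ha) (by linarith) (by linarith),
      show 2*l1 + l2 - x + τ = (2*l1 + l2 - x + τ - 1) + 1 by ring, toCirc_add_one,
      FF_eval1 l1 l2 τ _ (by linarith) (by linarith) (by linarith),
      show l1 - (2*l1 + l2 - x + τ - 1) + τ = x + l3 by linarith]
  have C4 : ∀ x ∈ Ioo (l1 + τ - l3) (l1 + l2),
      FF l1 l2 τ (FF l1 l2 τ (toCirc x)) = toCirc (x - l1) := by
    rintro x ⟨ha, hb⟩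
    rw [FF_eval2 l1 l2 τ x (by linarith) (by linarith) hb (by linarith),
      FF_eval3 l1 l2 τ _ (by linarith) (by linarith) (by linarith) (by linarith),
      show l1 + l2 + 1 - (2*l1 + l2 - x + τ) + τ = (x - l1) + 1 by ring, toCirc_add_one]
  have C5 : ∀ x ∈ Ioo (l1 + l2) (l2 + τ),
      FF l1 l2 τ (FF l1 l2 τ (toCirc x)) = toCirc (x + l1) := by
    rintro x ⟨ha, hb⟩
    rw [FF_eval3 l1 l2 τ x (by linarith) (by linarith) (le_of_lt ha) (by linarith),
      show l1 + l2 + 1 - x + τ = (l1 + l2 - x + τ) + 1 by ring, toCirc_add_one,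
      FF_eval2 l1 l2 τ _ (by linarith) (by linarith) (by linarith) (by linarith),
      show 2*l1 + l2 - (l1 + l2 - x + τ) + τ = x + l1 by ring]
  have C6 : ∀ x ∈ Ioo (l2 + τ) 1,
      FF l1 l2 τ (FF l1 l2 τ (toCirc x)) = toCirc (x - l2) := by
    rintro x ⟨ha, hb⟩
    rw [FF_eval3 l1 l2 τ x (by linarith) (by linarith) (by linarith) hb,
      show l1 + l2 + 1 - x + τ = (l1 + l2 - x + τ) + 1 by ring, toCirc_add_one,
      FF_eval1 l1 l2 τ _ (by linarith) (by linarith) (by linarith),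
      show l1 - (l1 + l2 - x + τ) + τ = x - l2 by ring]
  refine ⟨⟨by linarith, by linarith, by linarith, by linarith, by linarith, by linarith⟩,
    ⟨by ring, by linarith, by linarith, by linarith, by linarith, by linarith⟩,
    C1, C2, C3, C4, C5, C6, ?_, ?_⟩
  · rintro x (((((h|h)|h)|h)|h)|h)
    · exact ⟨l2, by simp, C1 x h⟩
    · exact ⟨-l3, by simp, by rw [C2 x h]; ring_nf⟩
    · exact ⟨l3, by simp, C3 x h⟩
    · exact ⟨-l1, by simp, by rw [C4 x h]; ring_nf⟩
    · exact ⟨l1, by simp, C5 x h⟩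
    · exact ⟨-l2, by simp, by rw [C6 x h]; ring_nf⟩
  · rintro x (((((h|h)|h)|h)|h)|h)
    · rw [C1 x h]; exact toCirc_ne x l2 (by linarith) (by rw [abs_of_pos h2]; linarith)
    · rw [C2 x h, show x - l3 = x + (-l3) by ring]
      exact toCirc_ne x (-l3) (by linarith) (by rw [abs_of_neg (by linarith)]; linarith)
    · rw [C3 x h]; exact toCirc_ne x l3 (by linarith) (by rw [abs_of_pos h3]; linarith)
    · rw [C4 x h, show x - l1 = x + (-l1) by ring]
      exact toCirc_ne x (-l1) (by linarith) (by rw [abs_of_neg (by linarith)]; linarith)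
    · rw [C5 x h]; exact toCirc_ne x l1 (by linarith) (by rw [abs_of_pos h1]; linarith)
    · rw [C6 x h, show x - l2 = x + (-l2) by ring]
      exact toCirc_ne x (-l2) (by linarith) (by rw [abs_of_neg (by linarith)]; linarith)

end
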